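/- Let A, B, C be nonempty finite types, let μ be a probability mass function on A × B and let ν be a probability mass function on B × C whose marginal distributions on B coincide. Then there exists a probability mass function π on A × B × C such that, writing π_B for its marginal on B, one has: the marginal of π on A × B equals μ, the marginal of π on B × C equals ν, and for all a ∈ A, b ∈ B, c ∈ C the identity π(a,b,c) · π_B(b) = μ(a,b) · ν(b,c) holds (i.e., under π the first and third coordinates are conditionally independent given the second). -/

import Mathlib

/-- Distribution Gluing Lemma, PMF form. If `μ` is a probability mass
function on `A × B` and `ν` one on `B × C` whose marginals on `B` agree, then there is a
probability mass function `π` on `A × B × C` whose marginal on `A × B` is `μ`, whose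
marginal on `B × C` is `ν`, and under which the first and third coordinates are
conditionally independent given the second:
`π(a,b,c) · π_B(b) = μ(a,b) · ν(b,c)` for all `a, b, c`. -/
theorem pmf_gluing {A B C : Type} [Fintype A] [Fintype B] [Fintype C]
    [Nonempty A] [Nonempty B] [Nonempty C]
    (μ : PMF (A × B)) (ν : PMF (B × C))
    (hmarg : μ.map Prod.snd = ν.map Prod.fst) :
    ∃ π : PMF (A × B × C),
      π.map (fun p => (p.1, p.2.1)) = μ ∧
      π.map (fun p => p.2) = ν ∧
      ∀ a b c, π (a, b, c) * (π.map (fun p => p.2.1)) b = μ (a, b) * ν (b, c) := by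
  classical
  set m : B → ENNReal := fun b => ∑ a, μ (a, b) with hm
  have hmap : ∀ b, (μ.map Prod.snd) b = m b := by
    intro b
    simp only [PMF.map_apply, tsum_fintype, Fintype.sum_prod_type]
    simp only [Finset.sum_ite_eq, Finset.mem_univ, if_true, hm]
  have hmν : ∀ b, (∑ c, ν (b, c)) = m b := by
    intro b
    rw [← hmap b, hmarg]
    simp only [PMF.map_apply, tsum_fintype, Fintype.sum_prod_type]
    rw [Finset.sum_comm]
    simp only [Finset.sum_ite_eq, Finset.mem_univ, if_true]
  have hsum : ∑ b, m b = 1 := by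
    have := μ.tsum_coe
    rw [tsum_fintype, Fintype.sum_prod_type] at this
    rw [hm, Finset.sum_comm]
    exact this
  have hfin : ∀ b, m b ≠ ⊤ := by
    intro b
    refine ne_top_of_le_ne_top (by simp : (1:ENNReal) ≠ ⊤) ?_
    rw [← hsum]
    exact Finset.single_le_sum (fun _ _ => zero_le) (Finset.mem_univ b)
  have hzμ : ∀ a b, m b = 0 → μ (a, b) = 0 := by
    intro a b h
    rw [hm] at h
    exact (Finset.sum_eq_zero_iff.mp h) a (Finset.mem_univ a)
  have hzν : ∀ b c, m b = 0 → ν (b, c) = 0 := by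
    intro b c h
    rw [← hmν b] at h
    exact (Finset.sum_eq_zero_iff.mp h) c (Finset.mem_univ c)
  set f : A × B × C → ENNReal := fun p => μ (p.1, p.2.1) * ν p.2 * (m p.2.1)⁻¹ with hf
  have h1 : ∀ b, (∑ a, ∑ c, f (a, b, c)) = m b := by
    intro b
    have step : (∑ a, ∑ c, f (a, b, c)) = (∑ a, μ (a, b)) * (∑ c, ν (b, c) * (m b)⁻¹) := by
      rw [Finset.sum_mul_sum]
      simp only [hf, mul_assoc]
    rw [step, ← Finset.sum_mul, hmν b]
    show m b * (m b * (m b)⁻¹) = m b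
    by_cases h : m b = 0
    · simp [h]
    · rw [ENNReal.mul_inv_cancel h (hfin b), mul_one]
  have hfsum : ∑ p, f p = 1 := by
    simp only [Fintype.sum_prod_type]
    rw [Finset.sum_comm, ← hsum]
    exact Finset.sum_congr rfl fun b _ => h1 b
  refine ⟨PMF.ofFintype f hfsum, ?_, ?_, ?_⟩
  · ext ⟨a, b⟩
    simp only [PMF.map_apply, PMF.ofFintype_apply, tsum_fintype]
    have key : (∑ p : A × B × C, if (a,b) = (p.1, p.2.1) then f p else 0) = ∑ c, f (a, b, c) := by
      simp only [Fintype.sum_prod_type, Prod.mk.injEq, ite_and, Finset.sum_ite_irrel,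
        Finset.sum_const_zero, Finset.sum_ite_eq, Finset.mem_univ, if_true]
      rw [Finset.sum_comm]
      simp only [Finset.sum_ite_eq, Finset.mem_univ, if_true]
    refine (by convert key : _ = ∑ c, f (a, b, c)).trans ?_
    simp only [hf]
    rw [← Finset.sum_mul, ← Finset.mul_sum, hmν b]
    by_cases h : m b = 0
    · simp [h, hzμ a b h]
    · rw [mul_assoc, ENNReal.mul_inv_cancel h (hfin b), mul_one]
  · ext ⟨b, c⟩
    simp only [PMF.map_apply, PMF.ofFintype_apply, tsum_fintype]
    have key : (∑ p : A × B × C, if (b, c) = p.2 then f p else 0) = ∑ a, f (a, b, c) := by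
      simp only [Fintype.sum_prod_type, Prod.mk.injEq, ite_and, Finset.sum_ite_irrel,
        Finset.sum_const_zero, Finset.sum_ite_eq, Finset.mem_univ, if_true]
    refine (by convert key : _ = ∑ a, f (a, b, c)).trans ?_
    simp only [hf]
    rw [← Finset.sum_mul, ← Finset.sum_mul]
    show m b * ν (b, c) * (m b)⁻¹ = ν (b, c)
    by_cases h : m b = 0
    · simp [h, hzν b c h]
    · rw [mul_comm (m b), mul_assoc, ENNReal.mul_inv_cancel h (hfin b), mul_one]
  · intro a b c
    have hπB : (PMF.map (fun p => p.2.1) (PMF.ofFintype f hfsum)) b = m b := by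
      simp only [PMF.map_apply, PMF.ofFintype_apply, tsum_fintype]
      have key : (∑ p : A × B × C, if b = p.2.1 then f p else 0) = ∑ a, ∑ c, f (a, b, c) := by
        simp only [Fintype.sum_prod_type, Finset.sum_ite_irrel,
          Finset.sum_const_zero, Finset.sum_ite_eq, Finset.mem_univ, if_true]
        refine Finset.sum_congr rfl fun a _ => ?_
        rw [Finset.sum_comm]
        simp only [Finset.sum_ite_eq, Finset.mem_univ, if_true]
      rw [key, h1 b]
    rw [hπB, PMF.ofFintype_apply]
    show μ (a, b) * ν (b, c) * (m b)⁻¹ * m b = μ (a, b) * ν (b, c)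
    by_cases h : m b = 0
    · simp [h, hzμ a b h]
    · rw [mul_assoc, ENNReal.inv_mul_cancel h (hfin b), mul_one]
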